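/- Let μ_F and μ_G be Borel probability measures on [0, M] with cumulative distribution functions F and G. Suppose ∫_v^M F(t) dt ≤ ∫_v^M G(t) dt for all v ∈ [0, M], with equality at v = 0 (i.e., F is a mean-preserving spread of G). Then for every continuous convex function φ : [0, M] → ℝ, ∫ φ dμ_F ≥ ∫ φ dμ_G. -/

import Mathlib

open MeasureTheory Set

-- clamp to [0,M]
noncomputable def clmp (M x : ℝ) : ℝ := max 0 (min x M)

lemma clmp_mem {M : ℝ} (hM : 0 ≤ M) (x : ℝ) : clmp M x ∈ Icc 0 M := by
  constructor
  · exact le_max_left _ _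
  · simp [clmp, max_le_iff, min_le_right, hM]

lemma clmp_eq {M x : ℝ} (hx : x ∈ Icc 0 M) : clmp M x = x := by
  simp [clmp, min_eq_left hx.2, max_eq_right hx.1]

lemma clmp_continuous (M : ℝ) : Continuous (clmp M) := by
  exact continuous_const.max (continuous_id.min continuous_const)

-- the put payoff
noncomputable def putf (M t x : ℝ) : ℝ := max (clmp M x - t) 0

lemma putf_continuous (M t : ℝ) : Continuous (putf M t) := by
  unfold putf; exact (((clmp_continuous M).sub continuous_const).max continuous_const)

lemma putf_nonneg (M t x : ℝ) : 0 ≤ putf M t x := le_max_right _ _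

lemma putf_le {M t : ℝ} (hM : 0 ≤ M) (ht : 0 ≤ t) (x : ℝ) : putf M t x ≤ M := by
  have h := (clmp_mem hM x).2
  unfold putf
  refine max_le (by linarith) hM

lemma putf_integrable {M t : ℝ} (hM : 0 ≤ M) (ht : 0 ≤ t) (μ : Measure ℝ)
    [IsProbabilityMeasure μ] : Integrable (putf M t) μ := by
  refine (integrable_const M).mono' ((putf_continuous M t).aestronglyMeasurable) ?_
  refine .of_forall fun x => ?_
  rw [Real.norm_eq_abs, abs_of_nonneg (putf_nonneg M t x)]
  exact putf_le hM ht x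

lemma F_mono (μ : Measure ℝ) [IsProbabilityMeasure μ] :
    Monotone (fun v => (μ (Set.Iic v)).toReal) := by
  intro a b hab
  exact ENNReal.toReal_mono (measure_ne_top μ _) (measure_mono (Iic_subset_Iic.2 hab))

lemma put_eq {M : ℝ} (hM : 0 < M) (μ : Measure ℝ) [IsProbabilityMeasure μ]
    (hs : μ (Set.Icc 0 M)ᶜ = 0) {t : ℝ} (ht : t ∈ Icc 0 M) :
    ∫ x, putf M t x ∂μ = ∫ s in t..M, (1 - (μ (Set.Iic s)).toReal) := by
  set F : ℝ → ℝ := fun v => (μ (Set.Iic v)).toReal with hFdef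
  have key := (putf_integrable hM.le ht.1 μ).integral_eq_integral_meas_lt
    (Filter.Eventually.of_forall (putf_nonneg M t))
  rw [key]
  have hmeasIoi : ∀ u : ℝ, (μ (Set.Ioi u)).toReal = 1 - F u := by
    intro u
    have h1 : μ (Set.Iic u) + μ (Set.Ioi u) = 1 := by
      rw [← Set.compl_Iic]
      rw [measure_add_measure_compl measurableSet_Iic]
      simp
    have h2 : (μ (Set.Iic u)).toReal + (μ (Set.Ioi u)).toReal = 1 := by
      rw [← ENNReal.toReal_add (measure_ne_top μ _) (measure_ne_top μ _), h1]
      simp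
    simp only [hFdef]; linarith
  have hcong : ∀ s ∈ Set.Ioi (0:ℝ), (μ {a | s < putf M t a}).toReal
      = Set.indicator (Set.Ioo 0 (M - t)) (fun s => 1 - F (s + t)) s := by
    intro s hs
    simp only [Set.mem_Ioi] at hs
    by_cases h : s + t < M
    · have hset : {a | s < putf M t a} = Set.Ioi (s + t) := by
        ext a
        simp only [Set.mem_setOf_eq, Set.mem_Ioi, putf, lt_max_iff]
        constructor
        · rintro (h1 | h1)
          · have hc : s + t < clmp M a := by linarith
            have h2 : s + t < min a M := by
              rcases le_or_gt (min a M) 0 with h3 | h3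
              · have he : clmp M a = 0 := max_eq_left h3
                rw [he] at hc; nlinarith [ht.1]
              · have he : clmp M a = min a M := max_eq_right h3.le
                rw [he] at hc; exact hc
            exact lt_of_lt_of_le h2 (min_le_left _ _)
          · linarith
        · intro h1
          left
          have h2 : s + t < min a M := lt_min h1 h
          have : min a M ≤ clmp M a := le_max_right _ _
          linarith
      rw [hset, hmeasIoi]
      rw [Set.indicator_of_mem (by constructor <;> [exact hs; linarith])]
    · have hset : {a | s < putf M t a} = (∅ : Set ℝ) := by
        ext a
        simp only [Set.mem_setOf_eq, Set.mem_empty_iff_false, iff_false, not_lt, putf]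
        have h1 : clmp M a ≤ M := (clmp_mem hM.le a).2
        refine max_le (by linarith) (by linarith)
      rw [hset]
      rw [Set.indicator_of_notMem (by simp only [Set.mem_Ioo, not_and_or, not_lt]; right; linarith)]
      simp
  simp only [measureReal_def]
  rw [setIntegral_congr_fun measurableSet_Ioi hcong]
  rw [setIntegral_indicator measurableSet_Ioo]
  have hint : Set.Ioi (0:ℝ) ∩ Set.Ioo 0 (M - t) = Set.Ioo 0 (M - t) := by
    apply Set.inter_eq_right.2
    exact fun x hx => hx.1
  rw [hint]
  have h0Mt : (0:ℝ) ≤ M - t := by linarith [ht.2]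
  rw [← MeasureTheory.integral_Ioc_eq_integral_Ioo,
    ← intervalIntegral.integral_of_le h0Mt]
  have := intervalIntegral.integral_comp_add_right (a := 0) (b := M - t)
    (fun u => 1 - F u) t
  simpa using this


lemma tele (φ : ℝ → ℝ) (h : ℝ) (hh : h ≠ 0) (t : ℕ → ℝ) (htd : ∀ i, t (i+1) = t i + h)
    (ht0 : t 0 = 0) (s : ℕ → ℝ) (hs : ∀ i, s (i+1) = (φ (t (i+1)) - φ (t i)) / h)
    (j : ℕ) (x : ℝ) :
    φ 0 + s 1 * x + (∑ i ∈ Finset.Ico 1 (j+1), (s (i+1) - s i) * (x - t i))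
      = φ (t j) + s (j+1) * (x - t j) := by
  induction j with
  | zero => simp [ht0]
  | succ j ih =>
      rw [Finset.sum_Ico_succ_top (by omega : 1 ≤ j + 1)]
      rw [← add_assoc, ih]
      have hs1 : s (j+1) * h = φ (t (j+1)) - φ (t j) := by
        rw [hs]; field_simp
      have ht1 : t (j+1) = t j + h := htd j
      have hs2 : s (j+2) * h = φ (t (j+2)) - φ (t (j+1)) := by
        rw [hs]; field_simp
      linear_combination hs1 + s (j+1) * ht1

lemma pwl_approx (M : ℝ) (hM : 0 < M) (φ : ℝ → ℝ)
    (hφc : ContinuousOn φ (Icc 0 M)) (hφv : ConvexOn ℝ (Icc 0 M) φ)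
    (ε : ℝ) (hε : 0 < ε) :
    ∃ (n : ℕ) (a b : ℝ) (c : ℕ → ℝ) (t : ℕ → ℝ),
      (∀ i ∈ Finset.Ico 1 n, 0 ≤ c i) ∧ (∀ i ∈ Finset.Ico 1 n, t i ∈ Icc 0 M) ∧
      (∀ x ∈ Icc 0 M,
        |a + b * putf M 0 x + (∑ i ∈ Finset.Ico 1 n, c i * putf M (t i) x) - φ x| ≤ ε) := by
  -- uniform continuity
  have huc : UniformContinuousOn φ (Icc 0 M) :=
    isCompact_Icc.uniformContinuousOn_of_continuous hφc
  rw [Metric.uniformContinuousOn_iff] at huc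
  obtain ⟨δ, hδ, hδ'⟩ := huc ε hε
  -- partition
  set n : ℕ := ⌊M / δ⌋₊ + 1 with hndef
  have hn1 : 1 ≤ n := Nat.le_add_left 1 _
  set h : ℝ := M / n with hhdef
  have hnpos : (0:ℝ) < n := by positivity
  have hh : 0 < h := by positivity
  have hhδ : h < δ := by
    rw [hhdef, div_lt_iff₀ hnpos]
    have : M / δ < (n:ℝ) := by
      rw [hndef]; push_cast; exact Nat.lt_floor_add_one _
    calc M = (M / δ) * δ := by field_simp
    _ < n * δ := by apply mul_lt_mul_of_pos_right this hδ
    _ = δ * n := by ring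
  set t : ℕ → ℝ := fun i => i * h with htdef
  have ht0 : t 0 = 0 := by simp [htdef]
  have htd : ∀ i, t (i+1) = t i + h := by
    intro i; simp [htdef]; push_cast; ring
  have htn : t n = M := by
    show (n:ℝ) * (M / n) = M
    field_simp
  have htmono : ∀ i j : ℕ, i ≤ j → t i ≤ t j := by
    intro i j hij
    exact mul_le_mul_of_nonneg_right (Nat.cast_le.2 hij) hh.le
  have htmem : ∀ i : ℕ, i ≤ n → t i ∈ Icc 0 M := by
    intro i hi
    refine ⟨by positivity, ?_⟩
    rw [← htn]; exact htmono i n hi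
  set s : ℕ → ℝ := fun i => (φ (t i) - φ (t (i-1))) / h with hsdef
  have hs : ∀ i, s (i+1) = (φ (t (i+1)) - φ (t i)) / h := by
    intro i; simp [hsdef]
  refine ⟨n, φ 0, s 1, fun i => s (i+1) - s i, t, ?_, ?_, ?_⟩
  · -- convexity: slopes increase
    intro i hi
    simp only [Finset.mem_Ico] at hi
    obtain ⟨hi1, hi2⟩ := hi
    have hx : t (i-1) ∈ Icc 0 M := htmem _ (by omega)
    have hz : t (i+1) ∈ Icc 0 M := htmem _ (by omega)
    have hstep : t i = t (i-1) + h := by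
      have h1 := htd (i-1)
      have h2 : i - 1 + 1 = i := by omega
      rwa [h2] at h1
    have hxy : t (i-1) < t i := by rw [hstep]; linarith
    have hyz : t i < t (i+1) := by rw [htd]; linarith
    have hslope := hφv.slope_mono_adjacent hx hz hxy hyz
    have e1 : t i - t (i-1) = h := by rw [hstep]; ring
    have e2 : t (i+1) - t i = h := by rw [htd]; ring
    rw [e1, e2] at hslope
    show 0 ≤ s (i+1) - s i
    have hsi : s i = (φ (t i) - φ (t (i-1))) / h := rfl
    rw [hs, hsi]
    linarith
  · intro i hi
    simp only [Finset.mem_Ico] at hi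
    exact htmem i (by omega)
  · -- approximation bound
    intro x hx
    -- find j
    set j : ℕ := min (n-1) ⌊x / h⌋₊ with hjdef
    have hjn : j < n := by
      have : j ≤ n - 1 := min_le_left _ _
      omega
    have hxl : t j ≤ x := by
      have h1 : (j : ℝ) ≤ ⌊x / h⌋₊ := Nat.cast_le.2 (min_le_right _ _)
      have h2 : (⌊x / h⌋₊ : ℝ) ≤ x / h := Nat.floor_le (div_nonneg hx.1 hh.le)
      rw [htdef]
      calc (j : ℝ) * h ≤ (x / h) * h := by
            apply mul_le_mul_of_nonneg_right (le_trans h1 h2) hh.le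
      _ = x := by field_simp
    have hxr : x ≤ t (j+1) := by
      rcases le_or_gt ⌊x / h⌋₊ (n-1) with hc | hc
      · have hj2 : j = ⌊x / h⌋₊ := min_eq_right hc
        have h2 : x / h < ⌊x / h⌋₊ + 1 := Nat.lt_floor_add_one _
        rw [htdef]
        have : x / h * h < ((⌊x / h⌋₊ : ℝ) + 1) * h := mul_lt_mul_of_pos_right h2 hh
        rw [hj2]; push_cast
        calc x = x / h * h := by field_simp
        _ ≤ ((⌊x / h⌋₊ : ℝ) + 1) * h := this.le
      · have hj2 : j = n - 1 := min_eq_left hc.le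
        have : j + 1 = n := by omega
        rw [this, htn]; exact hx.2
    -- value of the pwl function
    have hval : φ 0 + s 1 * putf M 0 x
        + (∑ i ∈ Finset.Ico 1 n, (s (i+1) - s i) * putf M (t i) x)
        = φ (t j) + s (j+1) * (x - t j) := by
      have hc : clmp M x = x := clmp_eq hx
      have hput0 : putf M 0 x = x := by
        rw [putf, hc]; simp [max_eq_left hx.1]
      have hsplit : ∑ i ∈ Finset.Ico 1 n, (s (i+1) - s i) * putf M (t i) x
          = ∑ i ∈ Finset.Ico 1 (j+1), (s (i+1) - s i) * (x - t i) := by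
        rw [← Finset.sum_Ico_consecutive _ (by omega : 1 ≤ j+1) (by omega : j+1 ≤ n)]
        have hz : ∑ i ∈ Finset.Ico (j+1) n, (s (i+1) - s i) * putf M (t i) x = 0 := by
          apply Finset.sum_eq_zero
          intro i hi
          simp only [Finset.mem_Ico] at hi
          have : x ≤ t i := le_trans hxr (htmono _ _ hi.1)
          have : putf M (t i) x = 0 := by
            rw [putf, hc]; simp [max_eq_right (by linarith : x - t i ≤ 0)]
          rw [this]; ring
        rw [hz, add_zero]
        apply Finset.sum_congr rfl
        intro i hi
        simp only [Finset.mem_Ico] at hi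
        have : t i ≤ x := le_trans (htmono _ _ (by omega : i ≤ j)) hxl
        rw [putf, hc, max_eq_left (by linarith : 0 ≤ x - t i)]
      rw [hput0, hsplit]
      exact tele φ h hh.ne' t htd ht0 s hs j x
    rw [hval]
    -- convex combination bound
    have hj1mem : t (j+1) ∈ Icc 0 M := htmem _ (by omega)
    have hjmem : t j ∈ Icc 0 M := htmem _ (by omega)
    have hb1 : |φ (t j) - φ x| < ε := by
      have := hδ' _ hjmem _ hx (by
        rw [Real.dist_eq]
        have : |t j - x| ≤ h := by
          rw [abs_le]; constructor
          · have := htd j; nlinarith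
          · linarith
        linarith)
      rwa [Real.dist_eq] at this
    have hb2 : |φ (t (j+1)) - φ x| < ε := by
      have := hδ' _ hj1mem _ hx (by
        rw [Real.dist_eq]
        have : |t (j+1) - x| ≤ h := by
          rw [abs_le]; constructor
          · linarith
          · have := htd j; nlinarith
        linarith)
      rwa [Real.dist_eq] at this
    -- ψ x = (1 - λ) φ (t j) + λ φ (t (j+1)) with λ = (x - t j)/h
    have hlam : s (j+1) * (x - t j) = ((x - t j)/h) * (φ (t (j+1)) - φ (t j)) := by
      rw [hs]; field_simp
    set lam : ℝ := (x - t j) / h with hlamdef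
    have hlam0 : 0 ≤ lam := div_nonneg (by linarith) hh.le
    have hlam1 : lam ≤ 1 := by
      rw [hlamdef, div_le_one hh]
      have := htd j; linarith
    rw [hlam]
    rw [abs_lt] at hb1 hb2
    rw [abs_le]
    constructor
    · nlinarith [hb1.1, hb2.1, hlam0, hlam1]
    · nlinarith [hb1.2, hb2.2, hlam0, hlam1]

/-- If `F` is a mean-preserving spread of `G` (both CDFs of Borel
probability measures on `[0, M]`), i.e. `∫_v^M F ≤ ∫_v^M G` for all `v ∈ [0,M]`
with equality at `v = 0`, then `∫ φ dμ_F ≥ ∫ φ dμ_G` for every continuous convex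
`φ : [0,M] → ℝ`. -/
theorem stmt_5 (M : ℝ) (hM : 0 < M)
    (μF μG : Measure ℝ)
    [IsProbabilityMeasure μF] [IsProbabilityMeasure μG]
    (hFs : μF (Set.Icc 0 M)ᶜ = 0) (hGs : μG (Set.Icc 0 M)ᶜ = 0)
    (F G : ℝ → ℝ)
    (hF : ∀ v, F v = (μF (Set.Iic v)).toReal)
    (hG : ∀ v, G v = (μG (Set.Iic v)).toReal)
    (hmps : ∀ v ∈ Set.Icc (0:ℝ) M, (∫ t in v..M, F t) ≤ ∫ t in v..M, G t)
    (heq : (∫ t in (0:ℝ)..M, F t) = ∫ t in (0:ℝ)..M, G t) :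
    ∀ φ : ℝ → ℝ, ContinuousOn φ (Set.Icc 0 M) → ConvexOn ℝ (Set.Icc 0 M) φ →
      (∫ x, φ x ∂μG) ≤ ∫ x, φ x ∂μF := by
  have hFeq : F = fun v => (μF (Set.Iic v)).toReal := funext hF
  have hGeq : G = fun v => (μG (Set.Iic v)).toReal := funext hG
  have hFi : ∀ u v : ℝ, IntervalIntegrable F volume u v := by
    rw [hFeq]; exact fun u v => (F_mono μF).intervalIntegrable
  have hGi : ∀ u v : ℝ, IntervalIntegrable G volume u v := by
    rw [hGeq]; exact fun u v => (F_mono μG).intervalIntegrable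
  have hputF : ∀ t ∈ Icc (0:ℝ) M, ∫ x, putf M t x ∂μF = (M - t) - ∫ s in t..M, F s := by
    intro t ht
    rw [put_eq hM μF hFs ht]
    simp only [← hF]
    rw [intervalIntegral.integral_sub intervalIntegrable_const (hFi t M),
      intervalIntegral.integral_const]
    simp [smul_eq_mul]
  have hputG : ∀ t ∈ Icc (0:ℝ) M, ∫ x, putf M t x ∂μG = (M - t) - ∫ s in t..M, G s := by
    intro t ht
    rw [put_eq hM μG hGs ht]
    simp only [← hG]
    rw [intervalIntegral.integral_sub intervalIntegrable_const (hGi t M),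
      intervalIntegral.integral_const]
    simp [smul_eq_mul]
  have hput : ∀ t ∈ Icc (0:ℝ) M, ∫ x, putf M t x ∂μG ≤ ∫ x, putf M t x ∂μF := by
    intro t ht
    rw [hputF t ht, hputG t ht]
    have := hmps t ht
    linarith
  have hput0 : ∫ x, putf M 0 x ∂μG = ∫ x, putf M 0 x ∂μF := by
    have h0 : (0:ℝ) ∈ Icc (0:ℝ) M := ⟨le_refl _, hM.le⟩
    rw [hputF 0 h0, hputG 0 h0, heq]
  intro φ hφc hφv
  -- replace φ by its clamped version
  have hmFae : ∀ᵐ x ∂μF, x ∈ Icc 0 M := by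
    have hcc : {x : ℝ | ¬ x ∈ Icc 0 M} = (Icc 0 M)ᶜ := rfl
    rw [ae_iff, hcc]; exact hFs
  have hmGae : ∀ᵐ x ∂μG, x ∈ Icc 0 M := by
    have hcc : {x : ℝ | ¬ x ∈ Icc 0 M} = (Icc 0 M)ᶜ := rfl
    rw [ae_iff, hcc]; exact hGs
  have hcongF : ∫ x, φ x ∂μF = ∫ x, φ (clmp M x) ∂μF :=
    integral_congr_ae (hmFae.mono fun x hx => by
      show φ x = φ (clmp M x); rw [clmp_eq hx])
  have hcongG : ∫ x, φ x ∂μG = ∫ x, φ (clmp M x) ∂μG :=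
    integral_congr_ae (hmGae.mono fun x hx => by
      show φ x = φ (clmp M x); rw [clmp_eq hx])
  rw [hcongF, hcongG]
  -- integrability of the clamped φ
  have hφcont : Continuous (fun x => φ (clmp M x)) :=
    hφc.comp_continuous (clmp_continuous M) (fun x => clmp_mem hM.le x)
  obtain ⟨C, hC⟩ := isCompact_Icc.exists_bound_of_continuousOn hφc
  have hφint : ∀ (μ : Measure ℝ), IsProbabilityMeasure μ →
      Integrable (fun x => φ (clmp M x)) μ := by
    intro μ hinst
    exact (integrable_const C).mono' hφcont.aestronglyMeasurable
      (Filter.Eventually.of_forall fun x => hC _ (clmp_mem hM.le x))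
  refine le_of_forall_pos_le_add ?_
  intro ε hε
  obtain ⟨n, a, b, c, tt, hc, htt, happ⟩ := pwl_approx M hM φ hφc hφv (ε/3) (by positivity)
  set ψ : ℝ → ℝ := fun x =>
    a + b * putf M 0 x + ∑ i ∈ Finset.Ico 1 n, c i * putf M (tt i) x with hψdef
  have hψint : ∀ (μ : Measure ℝ), IsProbabilityMeasure μ → Integrable ψ μ := by
    intro μ hinst
    refine (((integrable_const a).add
      ((putf_integrable hM.le le_rfl μ).const_mul b)).add
      (integrable_finset_sum _ fun i hi =>
        ((putf_integrable hM.le (htt i hi).1 μ).const_mul (c i))))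
  have hexpand : ∀ (μ : Measure ℝ), IsProbabilityMeasure μ →
      ∫ x, ψ x ∂μ = a + b * (∫ x, putf M 0 x ∂μ)
        + ∑ i ∈ Finset.Ico 1 n, c i * ∫ x, putf M (tt i) x ∂μ := by
    intro μ hinst
    have he1 : Integrable (fun x => b * putf M 0 x) μ :=
      (putf_integrable hM.le le_rfl μ).const_mul b
    have he2 : Integrable (fun x => a + b * putf M 0 x) μ :=
      (integrable_const a).add he1
    have he3 : Integrable
        (fun x => ∑ i ∈ Finset.Ico 1 n, c i * putf M (tt i) x) μ :=
      integrable_finset_sum _ fun i hi =>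
        ((putf_integrable hM.le (htt i hi).1 μ).const_mul (c i))
    rw [hψdef]
    rw [integral_add he2 he3, integral_add (integrable_const a) he1]
    rw [integral_const, integral_finset_sum _ fun i hi =>
        ((putf_integrable hM.le (htt i hi).1 μ).const_mul (c i))]
    simp only [integral_const_mul]
    simp [measure_univ]
  -- comparison for ψ
  have hψcmp : ∫ x, ψ x ∂μG ≤ ∫ x, ψ x ∂μF := by
    rw [hexpand μF inferInstance, hexpand μG inferInstance, hput0]
    have : ∑ i ∈ Finset.Ico 1 n, c i * ∫ x, putf M (tt i) x ∂μG
        ≤ ∑ i ∈ Finset.Ico 1 n, c i * ∫ x, putf M (tt i) x ∂μF := by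
      refine Finset.sum_le_sum fun i hi => ?_
      exact mul_le_mul_of_nonneg_left (hput _ (htt i hi)) (hc i hi)
    linarith
  -- approximation bounds
  have hboundG : ∫ x, φ (clmp M x) ∂μG ≤ ∫ x, ψ x ∂μG + ε/3 := by
    have : ∫ x, φ (clmp M x) ∂μG ≤ ∫ x, (ψ x + ε/3) ∂μG := by
      refine integral_mono_ae (hφint μG inferInstance)
        ((hψint μG inferInstance).add (integrable_const _)) ?_
      refine hmGae.mono fun x hx => ?_
      have h1 := happ x hx
      have h2 : ψ x = a + b * putf M 0 x
          + ∑ i ∈ Finset.Ico 1 n, c i * putf M (tt i) x := rfl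
      show φ (clmp M x) ≤ ψ x + ε / 3
      rw [clmp_eq hx, h2]
      rw [abs_le] at h1
      linarith [h1.1]
    rwa [integral_add (hψint μG inferInstance) (integrable_const _),
      integral_const, probReal_univ, one_smul] at this
  have hboundF : ∫ x, ψ x ∂μF ≤ ∫ x, φ (clmp M x) ∂μF + ε/3 := by
    have : ∫ x, ψ x ∂μF ≤ ∫ x, (φ (clmp M x) + ε/3) ∂μF := by
      refine integral_mono_ae (hψint μF inferInstance)
        ((hφint μF inferInstance).add (integrable_const _)) ?_
      refine hmFae.mono fun x hx => ?_
      have h1 := happ x hx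
      have h2 : ψ x = a + b * putf M 0 x
          + ∑ i ∈ Finset.Ico 1 n, c i * putf M (tt i) x := rfl
      show ψ x ≤ φ (clmp M x) + ε / 3
      rw [clmp_eq hx, h2]
      rw [abs_le] at h1
      linarith [h1.2]
    rwa [integral_add (hφint μF inferInstance) (integrable_const _),
      integral_const, probReal_univ, one_smul] at this
  linarith
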